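/- Expected nearest-neighbor distance moment bound: if X_1,…,X_n are i.i.d. from a distribution on [0,1]^d satisfying P_X(B(x,r)) ≥ c r^d for all 0 < r < r_λ and x in the support, then for any β > 0 there is a constant C (depending on c, d, β, r_λ) with E[‖X_{(1)}(x) − x‖^β] ≤ C n^{−β/d} for all x in the support. -/

import Mathlib

open MeasureTheory ProbabilityTheory Set Real ENNReal

/-- Distance bound within the unit cube. -/
lemma cube_dist_le_sqrt {d : ℕ} {y x : EuclideanSpace ℝ (Fin d)}
    (hy : (WithLp.ofLp y : Fin d → ℝ) ∈ Set.univ.pi fun _ => Set.Icc (0:ℝ) 1)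
    (hx : (WithLp.ofLp x : Fin d → ℝ) ∈ Set.univ.pi fun _ => Set.Icc (0:ℝ) 1) :
    ‖y - x‖ ≤ Real.sqrt d := by
  rw [EuclideanSpace.norm_eq]
  apply Real.sqrt_le_sqrt
  have h : ∀ i : Fin d, ‖(y - x) i‖ ^ 2 ≤ 1 := by
    intro i
    have hyi := hy i (Set.mem_univ i)
    have hxi := hx i (Set.mem_univ i)
    simp only [Set.mem_Icc] at hyi hxi
    have : (y - x) i = y i - x i := rfl
    rw [this, Real.norm_eq_abs, sq_abs]
    nlinarith [hyi.1, hyi.2, hxi.1, hxi.2]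
  calc ∑ i, ‖(y - x) i‖ ^ 2 ≤ ∑ _i : Fin d, (1:ℝ) := Finset.sum_le_sum fun i _ => h i
  _ = d := by simp

/-- Exponential decay beats any polynomial rate. -/
lemma exp_tail_le {a s : ℝ} (ha : 0 < a) (hs : 0 < s) :
    ∃ K : ℝ, 0 < K ∧ ∀ n : ℕ, 1 ≤ n →
      Real.exp (-((n:ℝ) * a)) ≤ K * (n:ℝ) ^ (-s) := by
  set k := ⌈s⌉₊ with hk
  refine ⟨k.factorial / a ^ k, by positivity, fun n hn => ?_⟩
  have hn1 : (1:ℝ) ≤ (n:ℝ) := by exact_mod_cast hn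
  have hn0 : (0:ℝ) < (n:ℝ) := by linarith
  have hpow : ((n:ℝ) * a) ^ k / (k.factorial : ℝ) ≤ Real.exp ((n:ℝ) * a) := by
    calc ((n:ℝ) * a) ^ k / (k.factorial : ℝ)
        ≤ ∑ i ∈ Finset.range (k+1), ((n:ℝ)*a) ^ i / (i.factorial : ℝ) :=
          Finset.single_le_sum (f := fun i => ((n:ℝ)*a) ^ i / (i.factorial : ℝ))
            (fun i _ => by positivity) (Finset.self_mem_range_succ k)
      _ ≤ _ := Real.sum_le_exp_of_nonneg (by positivity) _
  have key : Real.exp (-((n:ℝ)*a)) * (n:ℝ) ^ s ≤ (k.factorial : ℝ) / a ^ k := by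
    have h2 : (n:ℝ) ^ s ≤ (n:ℝ) ^ (k:ℝ) :=
      Real.rpow_le_rpow_of_exponent_le hn1 (Nat.le_ceil s)
    have h3 : (n:ℝ) ^ (k:ℝ) = (n:ℝ) ^ k := Real.rpow_natCast _ k
    have hnk : ((n:ℝ)*a) ^ k ≤ (k.factorial : ℝ) * Real.exp ((n:ℝ)*a) := by
      rw [div_le_iff₀ (by positivity)] at hpow
      linarith
    calc Real.exp (-((n:ℝ)*a)) * (n:ℝ) ^ s
        ≤ Real.exp (-((n:ℝ)*a)) * (n:ℝ) ^ (k:ℝ) := by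
          exact mul_le_mul_of_nonneg_left h2 (Real.exp_nonneg _)
      _ = (n:ℝ) ^ k / Real.exp ((n:ℝ)*a) := by rw [h3, Real.exp_neg]; ring
      _ ≤ (k.factorial : ℝ) / a ^ k := by
          rw [div_le_div_iff₀ (Real.exp_pos _) (by positivity)]
          calc (n:ℝ) ^ k * a ^ k = ((n:ℝ)*a) ^ k := (mul_pow _ _ _).symm
            _ ≤ (k.factorial : ℝ) * Real.exp ((n:ℝ)*a) := hnk
  have hns : (0:ℝ) < (n:ℝ) ^ s := Real.rpow_pos_of_pos hn0 s
  rw [Real.rpow_neg hn0.le, ← div_eq_mul_inv, le_div_iff₀ hns]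
  exact key

lemma meas_ofReal_rpow_exp (p q b : ℝ) :
    Measurable fun t : ℝ => ENNReal.ofReal (t ^ p * Real.exp (-b * t ^ q)) := by
  fun_prop

lemma meas_rpow_const (p : ℝ) : Measurable fun t : ℝ => t ^ p := by fun_prop

set_option maxHeartbeats 2000000 in
/-- Expected nearest-neighbor distance moment bound: if the
sampling distribution ν on [0,1]^d satisfies ν(B(x,r)) ≥ c r^d for 0 < r < r_λ
and x in the support, then E[‖X_(1)(x) − x‖^β] ≤ C n^{−β/d} for a constant C
depending only on c, d, β, r_λ. -/
theorem expected_nn_distance_moment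
    {d : ℕ} (hd : 1 ≤ d)
    (ν : Measure (EuclideanSpace ℝ (Fin d))) [IsProbabilityMeasure ν]
    (supp : Set (EuclideanSpace ℝ (Fin d)))
    (hsupp : supp ⊆ (WithLp.ofLp : EuclideanSpace ℝ (Fin d) → (Fin d → ℝ)) ⁻¹'
      (Set.univ.pi fun _ => Set.Icc (0:ℝ) 1))
    (hνsupp : ν supp = 1)
    (c rlam β : ℝ) (hc : 0 < c) (hrlam : 0 < rlam) (hβ : 0 < β)
    (hball : ∀ x ∈ supp, ∀ r : ℝ, 0 < r → r < rlam →
      ENNReal.ofReal (c * r ^ d) ≤ ν (Metric.ball x r)) :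
    ∃ C : ℝ, 0 < C ∧
      ∀ (n : ℕ) (hn : 1 ≤ n),
      ∀ (Ω : Type) (_ : MeasurableSpace Ω) (μ : Measure Ω),
        IsProbabilityMeasure μ →
      ∀ (Xs : Fin n → Ω → EuclideanSpace ℝ (Fin d)),
        (∀ i, Measurable (Xs i)) →
        (∀ i, Measure.map (Xs i) μ = ν) →
        iIndepFun Xs μ →
      ∀ x ∈ supp,
        (∫ ω, (Finset.univ.inf' (Finset.univ_nonempty_iff.mpr
            ⟨⟨0, by omega⟩⟩) fun i => ‖Xs i ω - x‖) ^ β ∂μ)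
          ≤ C * (n : ℝ) ^ (-(β / d)) := by
  have hd1 : (1:ℝ) ≤ (d:ℝ) := by exact_mod_cast hd
  have hd0 : (0:ℝ) < (d:ℝ) := by linarith
  -- constants
  set sd : ℝ := Real.sqrt d with hsd_def
  have hsd1 : 1 ≤ sd := Real.one_le_sqrt.mpr hd1
  have hsd0 : 0 < sd := by linarith
  set r0 : ℝ := min rlam sd / 2 with hr0_def
  have hr0 : 0 < r0 := by positivity
  have hr0rlam : r0 < rlam := by
    have := min_le_left rlam sd; rw [hr0_def]; linarith
  have hr0sd : r0 ≤ sd := by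
    have := min_le_right rlam sd; rw [hr0_def]; linarith
  set c2 : ℝ := min c (1 / r0 ^ d) with hc2_def
  have hc2 : 0 < c2 := lt_min hc (by positivity)
  set a : ℝ := c2 * r0 ^ d with ha_def
  have ha : 0 < a := by positivity
  obtain ⟨K, hK, hKle⟩ := exp_tail_le ha (div_pos hβ hd0 : 0 < β / (d:ℝ))
  set G : ℝ := c2 ^ (-(β / (d:ℝ))) * ((1 / (d:ℝ)) * Real.Gamma (β / (d:ℝ))) with hG_def
  have hG : 0 ≤ G := by
    have := Real.Gamma_pos_of_pos (div_pos hβ hd0)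
    have h1 : (0:ℝ) ≤ c2 ^ (-(β / (d:ℝ))) := Real.rpow_nonneg hc2.le _
    positivity
  set M : ℝ := max (r0 ^ (β - 1)) (sd ^ (β - 1)) with hM_def
  have hM : 0 ≤ M := le_max_of_le_left (Real.rpow_nonneg hr0.le _)
  refine ⟨β * (G + M * sd * K) + 1, by positivity, ?_⟩
  intro n hn Ω mΩ μ hμ Xs hmeas hmap hindep x hx
  have hn1 : (1:ℝ) ≤ (n:ℝ) := by exact_mod_cast hn
  set N : ℝ := (n:ℝ) ^ (-(β / (d:ℝ))) with hN_def
  have hN : 0 < N := Real.rpow_pos_of_pos (by linarith) _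
  have hne : (Finset.univ : Finset (Fin n)).Nonempty := ⟨⟨0, hn⟩, Finset.mem_univ _⟩
  set Z : Ω → ℝ := fun ω => Finset.univ.inf' hne fun i => ‖Xs i ω - x‖ with hZ_def
  have hZnn : ∀ ω, 0 ≤ Z ω := fun ω => Finset.le_inf' _ _ fun i _ => norm_nonneg _
  have hZm : Measurable Z := by
    apply measurable_of_Iio
    intro t
    have : Z ⁻¹' Set.Iio t = ⋃ i : Fin n, (fun ω => ‖Xs i ω - x‖) ⁻¹' Set.Iio t := by
      ext ω
      simp [hZ_def, Finset.inf'_lt_iff]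
    rw [this]
    exact MeasurableSet.iUnion fun i =>
      (((hmeas i).sub measurable_const).norm) measurableSet_Iio
  -- measurable tail sets
  have hSm : ∀ t : ℝ, MeasurableSet {y : EuclideanSpace ℝ (Fin d) | t < ‖y - x‖} := by
    intro t
    have : {y : EuclideanSpace ℝ (Fin d) | t < ‖y - x‖} = (Metric.closedBall x t)ᶜ := by
      ext y
      simp [Metric.mem_closedBall, dist_eq_norm, not_le]
    rw [this]
    exact Metric.isClosed_closedBall.measurableSet.compl
  -- product formula for the tail
  have htail : ∀ t : ℝ,
      μ {ω | t < Z ω} = ν {y | t < ‖y - x‖} ^ n := by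
    intro t
    have hset : {ω | t < Z ω} = ⋂ i ∈ Finset.univ,
        Xs i ⁻¹' {y : EuclideanSpace ℝ (Fin d) | t < ‖y - x‖} := by
      ext ω
      simp [hZ_def, Finset.lt_inf'_iff]
    rw [hset, hindep.measure_inter_preimage_eq_mul Finset.univ
      (sets := fun _ => {y : EuclideanSpace ℝ (Fin d) | t < ‖y - x‖}) fun i _ => hSm t]
    have heach : ∀ i : Fin n,
        μ (Xs i ⁻¹' {y : EuclideanSpace ℝ (Fin d) | t < ‖y - x‖})
          = ν {y | t < ‖y - x‖} := fun i => by
      rw [← hmap i, Measure.map_apply (hmeas i) (hSm t)]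
    rw [Finset.prod_congr rfl fun i _ => heach i, Finset.prod_const, Finset.card_univ,
      Fintype.card_fin]
  -- tail bound for small t
  have htail_le : ∀ t : ℝ, 0 < t → t < rlam →
      μ {ω | t < Z ω} ≤ ENNReal.ofReal (Real.exp (-((n:ℝ) * min 1 (c * t ^ d)))) := by
    intro t ht htr
    have hm0 : 0 ≤ min 1 (c * t ^ d) := le_min one_pos.le (by positivity)
    have hνS : ν {y | t < ‖y - x‖} ≤ ENNReal.ofReal (Real.exp (-(min 1 (c * t ^ d)))) := by
      have h1 : ν {y | t < ‖y - x‖} ≤ 1 - ν (Metric.ball x t) := by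
        have hsub : {y : EuclideanSpace ℝ (Fin d) | t < ‖y - x‖} ⊆ (Metric.ball x t)ᶜ := by
          intro y hy
          simp only [Set.mem_setOf_eq] at hy
          simp only [Set.mem_compl_iff, Metric.mem_ball, dist_eq_norm, not_lt]
          linarith
        calc ν {y | t < ‖y - x‖} ≤ ν (Metric.ball x t)ᶜ := measure_mono hsub
          _ = 1 - ν (Metric.ball x t) := by
            rw [measure_compl Metric.isOpen_ball.measurableSet (measure_ne_top ν _),
              measure_univ]
      have h2 : (1:ℝ≥0∞) - ν (Metric.ball x t)
          ≤ 1 - ENNReal.ofReal (min 1 (c * t ^ d)) := by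
        apply tsub_le_tsub_left
        calc ENNReal.ofReal (min 1 (c * t ^ d)) ≤ ENNReal.ofReal (c * t ^ d) :=
            ENNReal.ofReal_le_ofReal (min_le_right _ _)
          _ ≤ ν (Metric.ball x t) := hball x hx t ht htr
      have h3 : (1:ℝ≥0∞) - ENNReal.ofReal (min 1 (c * t ^ d))
          = ENNReal.ofReal (1 - min 1 (c * t ^ d)) := by
        rw [ENNReal.ofReal_sub _ hm0, ENNReal.ofReal_one]
      have h4 : 1 - min 1 (c * t ^ d) ≤ Real.exp (-(min 1 (c * t ^ d))) := by
        have := Real.add_one_le_exp (-(min 1 (c * t ^ d)))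
        linarith
      exact h1.trans (h2.trans (by rw [h3]; exact ENNReal.ofReal_le_ofReal h4))
    rw [htail t]
    calc ν {y | t < ‖y - x‖} ^ n
        ≤ ENNReal.ofReal (Real.exp (-(min 1 (c * t ^ d)))) ^ n :=
          pow_le_pow_left' hνS n
      _ = ENNReal.ofReal (Real.exp (-(min 1 (c * t ^ d))) ^ n) :=
          (ENNReal.ofReal_pow (Real.exp_nonneg _) n).symm
      _ = ENNReal.ofReal (Real.exp (-((n:ℝ) * min 1 (c * t ^ d)))) := by
          rw [← Real.exp_nat_mul]
          ring_nf
  -- tail vanishes beyond sqrt d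
  have hQm : MeasurableSet (WithLp.ofLp ⁻¹' (Set.univ.pi fun _ : Fin d => Set.Icc (0:ℝ) 1) :
      Set (EuclideanSpace ℝ (Fin d))) :=
    (MeasurableSet.univ_pi fun _ => measurableSet_Icc).preimage (by fun_prop)
  have hi0 : (⟨0, by omega⟩ : Fin n) ∈ Finset.univ := Finset.mem_univ _
  have hA : μ (Xs ⟨0, by omega⟩ ⁻¹' (WithLp.ofLp ⁻¹' (Set.univ.pi fun _ : Fin d => Set.Icc (0:ℝ) 1))) = 1 := by
    rw [← Measure.map_apply (hmeas _) hQm, hmap]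
    exact le_antisymm prob_le_one (hνsupp ▸ measure_mono hsupp)
  have hZsd : ∀ t : ℝ, sd ≤ t → μ {ω | t < Z ω} = 0 := by
    intro t hts
    refine le_antisymm ?_ zero_le
    have hsub : {ω | t < Z ω} ⊆
        (Xs ⟨0, by omega⟩ ⁻¹' (WithLp.ofLp ⁻¹' (Set.univ.pi fun _ : Fin d => Set.Icc (0:ℝ) 1)))ᶜ := by
      intro ω hω
      simp only [Set.mem_setOf_eq] at hω
      intro hmem
      have h1 : Z ω ≤ ‖Xs ⟨0, by omega⟩ ω - x‖ := Finset.inf'_le _ hi0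
      have h2 : ‖Xs ⟨0, by omega⟩ ω - x‖ ≤ sd := cube_dist_le_sqrt hmem (hsupp hx)
      linarith
    calc μ {ω | t < Z ω}
        ≤ μ (Xs ⟨0, by omega⟩ ⁻¹' (WithLp.ofLp ⁻¹' (Set.univ.pi fun _ : Fin d => Set.Icc (0:ℝ) 1)))ᶜ :=
          measure_mono hsub
      _ = 0 := by
          rw [measure_compl ((hmeas _) hQm) (measure_ne_top μ _), measure_univ, hA,
            tsub_self]
  -- second half: layer cake and integral bounds
  set b : ℝ := (n:ℝ) * c2 with hb_def
  have hb : 0 < b := by positivity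
  set E : ℝ := Real.exp (-((n:ℝ) * a)) with hE_def
  have hE : 0 ≤ E := Real.exp_nonneg _
  set g1 : ℝ → ℝ := fun t => t ^ (β - 1) * Real.exp (-b * t ^ (d:ℝ)) with hg1_def
  set g2 : ℝ → ℝ := fun t => (Set.Ioc r0 sd).indicator (fun _ => M * E) t with hg2_def
  have hmc : ∀ t : ℝ, 0 < t → t ≤ r0 → c2 * t ^ d ≤ min 1 (c * t ^ d) := by
    intro t ht htr0
    refine le_min ?_ (mul_le_mul_of_nonneg_right (min_le_left _ _) (by positivity))
    calc c2 * t ^ d ≤ (1 / r0 ^ d) * t ^ d :=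
        mul_le_mul_of_nonneg_right (min_le_right _ _) (by positivity)
      _ ≤ (1 / r0 ^ d) * r0 ^ d := by gcongr
      _ = 1 := by field_simp
  have hpt : ∀ t ∈ Set.Ioi (0:ℝ),
      μ {ω | t < Z ω} * ENNReal.ofReal (t ^ (β - 1))
        ≤ ENNReal.ofReal (g1 t) + ENNReal.ofReal (g2 t) := by
    intro t ht
    rw [Set.mem_Ioi] at ht
    rcases le_or_gt sd t with hts | hts
    · rw [hZsd t hts, zero_mul]; exact zero_le
    rcases le_or_gt t r0 with h1 | h1
    · have hkey : μ {ω | t < Z ω} ≤ ENNReal.ofReal (Real.exp (-b * t ^ (d:ℝ))) := by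
        refine (htail_le t ht (lt_of_le_of_lt h1 hr0rlam)).trans (ENNReal.ofReal_le_ofReal ?_)
        apply Real.exp_le_exp.mpr
        have hnn : (0:ℝ) ≤ (n:ℝ) := by positivity
        rw [Real.rpow_natCast, hb_def]
        nlinarith [mul_le_mul_of_nonneg_left (hmc t ht h1) hnn]
      calc μ {ω | t < Z ω} * ENNReal.ofReal (t ^ (β - 1))
          ≤ ENNReal.ofReal (Real.exp (-b * t ^ (d:ℝ))) * ENNReal.ofReal (t ^ (β - 1)) :=
            mul_le_mul_left hkey _
        _ = ENNReal.ofReal (g1 t) := by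
            rw [← ENNReal.ofReal_mul (Real.exp_nonneg _), hg1_def, mul_comm]
        _ ≤ _ := self_le_add_right _ _
    · have hkey : μ {ω | t < Z ω} ≤ ENNReal.ofReal E := by
        calc μ {ω | t < Z ω} ≤ μ {ω | r0 < Z ω} :=
            measure_mono (fun ω hω => h1.trans hω)
          _ ≤ ENNReal.ofReal (Real.exp (-((n:ℝ) * min 1 (c * r0 ^ d)))) :=
            htail_le r0 hr0 hr0rlam
          _ ≤ ENNReal.ofReal E := by
            apply ENNReal.ofReal_le_ofReal
            apply Real.exp_le_exp.mpr
            have hnn : (0:ℝ) ≤ (n:ℝ) := by positivity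
            
            nlinarith [mul_le_mul_of_nonneg_left (hmc r0 hr0 le_rfl) hnn]
      have hM' : ENNReal.ofReal (t ^ (β - 1)) ≤ ENNReal.ofReal M := by
        apply ENNReal.ofReal_le_ofReal
        rcases le_or_gt 1 β with hb1 | hb1
        · exact le_trans (Real.rpow_le_rpow ht.le hts.le (by linarith)) (le_max_right _ _)
        · exact le_trans (Real.rpow_le_rpow_of_nonpos hr0 h1.le (by linarith)) (le_max_left _ _)
      calc μ {ω | t < Z ω} * ENNReal.ofReal (t ^ (β - 1))
          ≤ ENNReal.ofReal E * ENNReal.ofReal M := mul_le_mul' hkey hM'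
        _ = ENNReal.ofReal (M * E) := by rw [← ENNReal.ofReal_mul hE, mul_comm]
        _ = ENNReal.ofReal (g2 t) := by
            simp only [hg2_def, Set.indicator_of_mem (Set.mem_Ioc.mpr ⟨h1, hts.le⟩)]
        _ ≤ _ := self_le_add_left _ _
  have hlayer := lintegral_rpow_eq_lintegral_meas_lt_mul μ
    (Filter.Eventually.of_forall hZnn) hZm.aemeasurable hβ
  have hg1int : IntegrableOn g1 (Set.Ioi 0) :=
    integrableOn_rpow_mul_exp_neg_mul_rpow (by linarith : (-1:ℝ) < β - 1) hd0 hb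
  have hg1nn : 0 ≤ᵐ[volume.restrict (Set.Ioi 0)] g1 := by
    filter_upwards [self_mem_ae_restrict measurableSet_Ioi] with t ht
    exact mul_nonneg (Real.rpow_nonneg (le_of_lt ht) _) (Real.exp_nonneg _)
  have hIg1 : ∫⁻ t in Set.Ioi 0, ENNReal.ofReal (g1 t) = ENNReal.ofReal (∫ t in Set.Ioi 0, g1 t) :=
    (ofReal_integral_eq_lintegral_ofReal hg1int hg1nn).symm
  have hval : ∫ t in Set.Ioi 0, g1 t ≤ G * N := by
    have h := integral_rpow_mul_exp_neg_mul_rpow hd0 (by linarith : (-1:ℝ) < β - 1) hb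
    have e1 : β - 1 + 1 = β := by ring
    rw [e1] at h
    have hb_r : b ^ (-β / (d:ℝ)) = N * c2 ^ (-(β / (d:ℝ))) := by
      rw [neg_div, hb_def, Real.mul_rpow (by positivity) hc2.le, hN_def]
    simp only [hg1_def]
    rw [h, hb_r, hG_def]
    apply le_of_eq
    ring
  have hg1m : Measurable fun t : ℝ => ENNReal.ofReal (g1 t) := by
    simp only [hg1_def]; exact meas_ofReal_rpow_exp _ _ _
  have hg2m : Measurable fun t : ℝ => ENNReal.ofReal (g2 t) := by
    simp only [hg2_def]
    exact (measurable_const.indicator measurableSet_Ioc).ennreal_ofReal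
  have hIg2 : ∫⁻ t in Set.Ioi 0, ENNReal.ofReal (g2 t) ≤ ENNReal.ofReal (M * E * sd) := by
    have hofg2 : ∀ t : ℝ, ENNReal.ofReal (g2 t)
        = (Set.Ioc r0 sd).indicator (fun _ => ENNReal.ofReal (M * E)) t := by
      intro t
      by_cases h : t ∈ Set.Ioc r0 sd <;> simp [hg2_def, h]
    simp_rw [hofg2]
    rw [lintegral_indicator measurableSet_Ioc, setLIntegral_const]
    have hvol : (volume.restrict (Set.Ioi (0:ℝ))) (Set.Ioc r0 sd) ≤ ENNReal.ofReal sd := by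
      rw [Measure.restrict_apply measurableSet_Ioc]
      calc volume (Set.Ioc r0 sd ∩ Set.Ioi 0) ≤ volume (Set.Ioc r0 sd) :=
          measure_mono Set.inter_subset_left
        _ = ENNReal.ofReal (sd - r0) := Real.volume_Ioc
        _ ≤ ENNReal.ofReal sd := ENNReal.ofReal_le_ofReal (by linarith)
    calc ENNReal.ofReal (M * E) * (volume.restrict (Set.Ioi (0:ℝ))) (Set.Ioc r0 sd)
        ≤ ENNReal.ofReal (M * E) * ENNReal.ofReal sd := mul_le_mul_right hvol _
      _ = ENNReal.ofReal (M * E * sd) := (ENNReal.ofReal_mul (mul_nonneg hM hE)).symm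
  have hL : (∫⁻ t in Set.Ioi 0, μ {a | t < Z a} * ENNReal.ofReal (t ^ (β - 1)))
      ≤ ENNReal.ofReal (G * N) + ENNReal.ofReal (M * E * sd) := by
    calc (∫⁻ t in Set.Ioi 0, μ {a | t < Z a} * ENNReal.ofReal (t ^ (β - 1)))
        ≤ ∫⁻ t in Set.Ioi 0, (ENNReal.ofReal (g1 t) + ENNReal.ofReal (g2 t)) :=
          setLIntegral_mono (hg1m.add hg2m) hpt
      _ = (∫⁻ t in Set.Ioi 0, ENNReal.ofReal (g1 t))
            + ∫⁻ t in Set.Ioi 0, ENNReal.ofReal (g2 t) := lintegral_add_left hg1m _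
      _ ≤ ENNReal.ofReal (G * N) + ENNReal.ofReal (M * E * sd) :=
          add_le_add (by rw [hIg1]; exact ENNReal.ofReal_le_ofReal hval) hIg2
  have hEb : E ≤ K * N := hKle n hn
  have hfinal : ∫⁻ ω, ENNReal.ofReal (Z ω ^ β) ∂μ
      ≤ ENNReal.ofReal ((β * (G + M * sd * K) + 1) * N) := by
    rw [hlayer]
    calc ENNReal.ofReal β * ∫⁻ t in Set.Ioi 0, μ {a | t < Z a} * ENNReal.ofReal (t ^ (β - 1))
        ≤ ENNReal.ofReal β * (ENNReal.ofReal (G * N) + ENNReal.ofReal (M * E * sd)) :=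
          mul_le_mul_right hL _
      _ = ENNReal.ofReal (β * (G * N + M * E * sd)) := by
          rw [← ENNReal.ofReal_add (mul_nonneg hG hN.le)
            (mul_nonneg (mul_nonneg hM hE) hsd0.le), ← ENNReal.ofReal_mul hβ.le]
      _ ≤ ENNReal.ofReal ((β * (G + M * sd * K) + 1) * N) := by
          apply ENNReal.ofReal_le_ofReal
          have h2 : β * (M * E * sd) ≤ β * (M * sd * (K * N)) := by
            apply mul_le_mul_of_nonneg_left _ hβ.le
            calc M * E * sd = M * sd * E := by ring
              _ ≤ M * sd * (K * N) :=
                mul_le_mul_of_nonneg_left hEb (mul_nonneg hM hsd0.le)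
          nlinarith [hN.le, mul_nonneg hG hN.le]
  have hmZβ : AEStronglyMeasurable (fun ω => Z ω ^ β) μ :=
    ((meas_rpow_const β).comp hZm).aestronglyMeasurable
  show (∫ ω, Z ω ^ β ∂μ) ≤ (β * (G + M * sd * K) + 1) * N
  rw [integral_eq_lintegral_of_nonneg_ae
    (Filter.Eventually.of_forall fun ω => Real.rpow_nonneg (hZnn ω) β) hmZβ]
  refine ENNReal.toReal_le_of_le_ofReal ?_ hfinal
  have hC0 : 0 ≤ β * (G + M * sd * K) + 1 := by
    nlinarith [mul_nonneg (mul_nonneg hM hsd0.le) hK.le, hG, hβ.le]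
  exact mul_nonneg hC0 hN.le
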